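/- Let M be a matroid with finite ground set E, let v : E → ℝ be a weight function taking nonnegative values that is injective on E, let S ⊆ E, and let u ∈ E. If B is a max-weight basis of S, B₁ is a max-weight basis of S ∪ {u}, and B₂ is a max-weight basis of B ∪ {u}, then B₁ = B₂. -/

import Mathlib

open scoped BigOperators

/-- `B` is a max-weight basis of `S` in the matroid `M` w.r.t. the weight function `v`:
`B` is a basis of `S` (a maximal `M`-independent subset of `S`) and every basis `B'`
of `S` has total weight at most that of `B`. -/
def IsMaxWeightBasis {α : Type*} (M : Matroid α) (v : α → ℝ) (S B : Set α) : Prop :=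
  M.IsBasis B S ∧ ∀ B' : Set α, M.IsBasis B' S → ∑ᶠ x ∈ B', v x ≤ ∑ᶠ x ∈ B, v x


open Set


-- key exchange lemma
lemma key_exchange {α : Type*} (M : Matroid α) (hE : M.E.Finite) (v : α → ℝ)
    (S B : Set α) (hSE : S ⊆ M.E)
    (hB : M.IsBasis B S) (hmax : ∀ B' : Set α, M.IsBasis B' S → ∑ᶠ x ∈ B', v x ≤ ∑ᶠ x ∈ B, v x)
    (z : α) (hzS : z ∈ S) (hzB : z ∉ B) (T : Set α) (hTB : T ⊆ B)
    (hlt : ∀ y ∈ B, y ∉ T → v y < v z)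
    (hind : M.Indep (insert z T)) : False := by
  have hBfin : B.Finite := hE.subset (hB.subset.trans hSE)
  obtain ⟨B', hB', hIB', hB'sub⟩ := hind.exists_isBasis_subset_union_isBasis
    (insert_subset hzS (hTB.trans hB.subset)) hB
  have hB'fin : B'.Finite := hE.subset (hB'.subset.trans hSE)
  have hzB' : z ∈ B' := hIB' (mem_insert _ _)
  have hB'iz : B' ⊆ insert z B := hB'sub.trans (by
    rw [insert_union]; exact insert_subset_insert (union_subset hTB subset_rfl))
  set A := B ∩ B' with hA
  have hzA : z ∉ A := fun h => hzB h.1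
  have hB'eq : B' = insert z A := by
    apply Subset.antisymm
    · intro x hx
      rcases hB'iz hx with h | h
      · exact h ▸ mem_insert _ _
      · exact mem_insert_of_mem _ ⟨h, hx⟩
    · exact insert_subset hzB' inter_subset_right
  have hcard : B.encard = B'.encard := hB.encard_eq_encard hB'
  have hAfin : A.Finite := hBfin.subset inter_subset_left
  have hBA : (B \ A).encard = 1 := by
    have h1 : B'.encard = A.encard + 1 := by
      rw [hB'eq, encard_insert_of_notMem hzA]
    have h2 : B.encard = (B \ A).encard + A.encard := by
      rw [← encard_union_eq disjoint_sdiff_left]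
      congr 1
      rw [diff_union_self, union_eq_self_of_subset_right inter_subset_left]
    rw [h2, h1, add_comm A.encard 1] at hcard
    have := hAfin.encard_lt_top
    exact WithTop.add_right_cancel this.ne hcard
  obtain ⟨y, hy⟩ := encard_eq_one.mp hBA
  have hyB : y ∈ B := (hy ▸ (rfl : y ∈ ({y} : Set α)) : y ∈ B \ A).1
  have hyA : y ∉ A := (hy ▸ (rfl : y ∈ ({y} : Set α)) : y ∈ B \ A).2
  have hyB' : y ∉ B' := fun h => hyA ⟨hyB, h⟩
  have hyT : y ∉ T := fun h => hyB' (hIB' (mem_insert_of_mem _ h))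
  have hvy : v y < v z := hlt y hyB hyT
  have hBeq : B = insert y A := by
    apply Subset.antisymm
    · intro x hx
      by_cases hx' : x ∈ A
      · exact mem_insert_of_mem _ hx'
      · have : x ∈ B \ A := ⟨hx, hx'⟩
        rw [hy] at this; exact this ▸ mem_insert _ _
    · exact insert_subset hyB inter_subset_left
  have hWB' : ∑ᶠ x ∈ B', v x = v z + ∑ᶠ x ∈ A, v x := by
    rw [hB'eq, finsum_mem_insert v hzA hAfin]
  have hWB : ∑ᶠ x ∈ B, v x = v y + ∑ᶠ x ∈ A, v x := by
    rw [hBeq, finsum_mem_insert v hyA hAfin]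
  have := hmax B' hB'
  rw [hWB', hWB] at this
  linarith

-- x ∈ S \ B implies x in closure of heavier elements of B
lemma mem_closure_heavier {α : Type*} (M : Matroid α) (hE : M.E.Finite) (v : α → ℝ)
    (hvinj : Set.InjOn v M.E)
    (S B : Set α) (hSE : S ⊆ M.E)
    (hB : M.IsBasis B S) (hmax : ∀ B' : Set α, M.IsBasis B' S → ∑ᶠ x ∈ B', v x ≤ ∑ᶠ x ∈ B, v x)
    (x : α) (hxS : x ∈ S) (hxB : x ∉ B) :
    x ∈ M.closure {y ∈ B | v x < v y} := by
  by_contra hcl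
  set T := {y ∈ B | v x < v y} with hT
  have hTB : T ⊆ B := sep_subset _ _
  have hTind : M.Indep T := hB.indep.subset hTB
  have hxT : x ∉ T := fun h => hxB h.1
  have hind : M.Indep (insert x T) := by
    rw [hTind.insert_indep_iff_of_notMem hxT]
    exact ⟨hSE hxS, hcl⟩
  refine key_exchange M hE v S B hSE hB hmax x hxS hxB T hTB ?_ hind
  intro y hyB hyT
  have : ¬ v x < v y := fun h => hyT ⟨hyB, h⟩
  have hne : v y ≠ v x := fun h =>
    hxB ((hvinj (hSE (hB.subset hyB)) (hSE hxS) h) ▸ hyB)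
  exact lt_of_le_of_ne (not_lt.mp this) hne

-- prefix lemma
lemma prefix_basis {α : Type*} (M : Matroid α) (hE : M.E.Finite) (v : α → ℝ)
    (S B : Set α) (hSE : S ⊆ M.E)
    (hB : M.IsBasis B S) (hmax : ∀ B' : Set α, M.IsBasis B' S → ∑ᶠ x ∈ B', v x ≤ ∑ᶠ x ∈ B, v x)
    (c : ℝ) : M.IsBasis {y ∈ B | c < v y} {y ∈ S | c < v y} := by
  set BP := {y ∈ B | c < v y} with hBP
  have hBPind : M.Indep BP := hB.indep.subset (sep_subset _ _)
  have hsub : BP ⊆ {y ∈ S | c < v y} := fun y hy => ⟨hB.subset hy.1, hy.2⟩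
  obtain ⟨B₀, hB₀, hBB₀⟩ := hBPind.subset_isBasis_of_subset hsub
    (fun y hy => hSE hy.1)
  have : B₀ = BP := by
    by_contra hne
    obtain ⟨z, hzB₀, hzBP⟩ := exists_of_ssubset (hBB₀.ssubset_of_ne (Ne.symm hne))
    have hzSP : z ∈ {y ∈ S | c < v y} := hB₀.subset hzB₀
    have hzB : z ∉ B := fun h => hzBP ⟨h, hzSP.2⟩
    have hind : M.Indep (insert z BP) :=
      hB₀.indep.subset (insert_subset hzB₀ hBB₀)
    refine key_exchange M hE v S B hSE hB hmax z hzSP.1 hzB BP (sep_subset _ _) ?_ hind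
    intro y hyB hyBP
    have : ¬ c < v y := fun h => hyBP ⟨hyB, h⟩
    exact lt_of_le_of_lt (not_lt.mp this) hzSP.2
  exact this ▸ hB₀

-- uniqueness of max weight basis
lemma maxweight_unique {α : Type*} (M : Matroid α) (hE : M.E.Finite) (v : α → ℝ)
    (hvinj : Set.InjOn v M.E)
    (S : Set α) (hSE : S ⊆ M.E) (B B' : Set α)
    (hB : IsMaxWeightBasis M v S B) (hB' : IsMaxWeightBasis M v S B') : B = B' := by
  by_contra hne
  have hkey : ∀ C C' : Set α, IsMaxWeightBasis M v S C → IsMaxWeightBasis M v S C' →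
      ∀ w ∈ C \ C', (∀ y ∈ (C \ C') ∪ (C' \ C), v y ≤ v w) → False := by
    intro C C' hC hC' w hw hmaxw
    have hwS : w ∈ S := hC.1.subset hw.1
    have hcl := mem_closure_heavier M hE v hvinj S C' hSE hC'.1 hC'.2 w hwS hw.2
    have hsub : {y ∈ C' | v w < v y} ⊆ C \ {w} := by
      intro y hy
      constructor
      · by_contra hyC
        exact absurd (hmaxw y (Or.inr ⟨hy.1, hyC⟩)) (not_le.mpr hy.2)
      · intro h; rw [mem_singleton_iff] at h; subst h; exact lt_irrefl _ hy.2
    have : w ∈ M.closure (C \ {w}) := M.closure_subset_closure hsub hcl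
    exact hC.1.indep.notMem_closure_sdiff_of_mem hw.1 this
  have hsd : ((B \ B') ∪ (B' \ B)).Nonempty := by
    rcases eq_or_ne (B \ B') ∅ with h | h
    · have hsub : B ⊆ B' := diff_eq_empty.mp h
      exact absurd (hB.1.eq_of_subset_indep hB'.1.indep hsub hB'.1.subset) hne
    · obtain ⟨x, hx⟩ := nonempty_iff_ne_empty.mpr h
      exact ⟨x, Or.inl hx⟩
  have hfin : ((B \ B') ∪ (B' \ B)).Finite :=
    ((hE.subset (hB.1.subset.trans hSE)).diff (t := B')).union ((hE.subset (hB'.1.subset.trans hSE)).diff (t := B))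
  obtain ⟨w, hw, hwmax0⟩ := Set.Finite.exists_maximalFor v _ hfin hsd
  have hwmax : ∀ y ∈ (B \ B') ∪ (B' \ B), v w ≤ v y → v w = v y :=
    fun y hy h => le_antisymm h (hwmax0 hy h)
  have hwmax' : ∀ y ∈ (B \ B') ∪ (B' \ B), v y ≤ v w := by
    intro y hy
    by_contra hlt
    exact absurd (hwmax y hy (le_of_lt (not_le.mp hlt))) (ne_of_lt (not_le.mp hlt))
  rcases hw with h | h
  · exact hkey B B' hB hB' w h hwmax'
  · exact hkey B' B hB' hB w h (fun y hy => hwmax' y (Or.symm hy))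

/-- The max-weight basis of `S ∪ {u}` equals the max-weight basis of
`MWB(S) ∪ {u}`: if `B` is a max-weight basis of `S`, `B₁` a max-weight basis of
`S ∪ {u}`, and `B₂` a max-weight basis of `B ∪ {u}`, then `B₁ = B₂`. -/

theorem maxWeightBasis_insert_eq_maxWeightBasis_of_maxWeightBasis {α : Type*}
    (M : Matroid α) (hE : M.E.Finite)
    (v : α → ℝ) (hv0 : ∀ x ∈ M.E, 0 ≤ v x) (hvinj : Set.InjOn v M.E)
    (S : Set α) (hSE : S ⊆ M.E) (u : α) (hu : u ∈ M.E)
    (B B₁ B₂ : Set α)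
    (hB : IsMaxWeightBasis M v S B)
    (hB₁ : IsMaxWeightBasis M v (S ∪ {u}) B₁)
    (hB₂ : IsMaxWeightBasis M v (B ∪ {u}) B₂) :
    B₁ = B₂ := by
  have hSuE : S ∪ {u} ⊆ M.E := Set.union_subset hSE (by simpa)
  have hBuE : B ∪ {u} ⊆ M.E := Set.union_subset ((hB.1.subset.trans hSE)) (by simpa)
  -- B₂ is a basis of S ∪ {u}
  have hB₂basis : M.IsBasis B₂ (S ∪ {u}) := by
    refine hB₂.1.indep.isBasis_of_subset_of_subset_closure
      (hB₂.1.subset.trans (Set.union_subset_union_left _ hB.1.subset)) ?_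
    rw [hB₂.1.closure_eq_closure]
    refine Set.union_subset ?_ ?_
    · exact (hB.1.subset_closure).trans (M.closure_subset_closure Set.subset_union_left)
    · exact Set.singleton_subset_iff.mpr (M.subset_closure (B ∪ {u}) hBuE (Set.mem_union_right _ rfl))
  -- B₁ ⊆ B ∪ {u}
  have hB₁sub : B₁ ⊆ B ∪ {u} := by
    intro x hx
    by_contra hxBu
    have hxB : x ∉ B := fun h => hxBu (Or.inl h)
    have hxu : x ≠ u := fun h => hxBu (Or.inr (by simp [h]))
    have hxS : x ∈ S := by
      rcases hB₁.1.subset hx with h | h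
      · exact h
      · exact absurd h hxu
    have hcl := mem_closure_heavier M hE v hvinj S B hSE hB.1 hB.2 x hxS hxB
    have hsub : {y ∈ B | v x < v y} ⊆ {y ∈ S ∪ {u} | v x < v y} :=
      fun y hy => ⟨Or.inl (hB.1.subset hy.1), hy.2⟩
    have hcl2 : x ∈ M.closure {y ∈ S ∪ {u} | v x < v y} :=
      M.closure_subset_closure hsub hcl
    have hpref := prefix_basis M hE v (S ∪ {u}) B₁ hSuE hB₁.1 hB₁.2 (v x)
    rw [← hpref.closure_eq_closure] at hcl2
    have hsub2 : {y ∈ B₁ | v x < v y} ⊆ B₁ \ {x} := by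
      intro y hy
      exact ⟨hy.1, fun h => absurd hy.2 (by rw [Set.mem_singleton_iff] at h; simp [h])⟩
    have : x ∈ M.closure (B₁ \ {x}) := M.closure_subset_closure hsub2 hcl2
    exact hB₁.1.indep.notMem_closure_sdiff_of_mem hx this
  -- B₁ is a basis of B ∪ {u}
  have hB₁basis : M.IsBasis B₁ (B ∪ {u}) := by
    refine hB₁.1.indep.isBasis_of_subset_of_subset_closure hB₁sub ?_
    exact (Set.union_subset_union_left _ hB.1.subset).trans hB₁.1.subset_closure
  -- weights equal, B₂ is max weight basis of S ∪ {u}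
  have hle1 : ∑ᶠ x ∈ B₁, v x ≤ ∑ᶠ x ∈ B₂, v x := hB₂.2 B₁ hB₁basis
  have hB₂max : IsMaxWeightBasis M v (S ∪ {u}) B₂ := by
    refine ⟨hB₂basis, fun B' hB' => ?_⟩
    exact le_trans (hB₁.2 B' hB') hle1
  exact maxweight_unique M hE v hvinj (S ∪ {u}) hSuE B₁ B₂ hB₁ hB₂max
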